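/- Let K be a field of characteristic zero and let A be the commutative quotient ring K[β,γ]/(γ³ − β², βγ). Then A is a K-vector space of dimension 5, with basis the images of 1, β, γ, γ², γ³. -/

import Mathlib

set_option maxHeartbeats 1000000

noncomputable section
open MvPolynomial

def conIdeal (K : Type*) [Field K] : Ideal (MvPolynomial (Fin 2) K) :=
  Ideal.span {(X 1)^3 - (X 0)^2, X 0 * X 1}

open Finsupp in
private lemma coeffs_vanish {K : Type*} [Field K] {p : MvPolynomial (Fin 2) K}
    (hp : p ∈ conIdeal K) :
    coeff 0 p = 0 ∧ coeff (single 0 1) p = 0 ∧ coeff (single 1 1) p = 0 ∧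
    coeff (single 1 2) p = 0 ∧
    coeff (single 1 3) p + coeff (single (0 : Fin 2) 2) p = 0 := by
  obtain ⟨u, v, rfl⟩ := Ideal.mem_span_pair.mp hp
  have h3 : (X 1 : MvPolynomial (Fin 2) K)^3 = monomial (single 1 3) 1 := X_pow_eq_monomial ..
  have h2 : (X 0 : MvPolynomial (Fin 2) K)^2 = monomial (single 0 2) 1 := X_pow_eq_monomial ..
  have hxy : (X 0 : MvPolynomial (Fin 2) K) * X 1 = monomial (single 0 1 + single 1 1) 1 := by
    rw [X, X, monomial_mul, one_mul]
  simp only [mul_sub, h3, h2, hxy, coeff_add, coeff_sub, coeff_mul_monomial',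
    Finsupp.single_le_iff, Finsupp.single_apply]
  norm_num [Finsupp.le_def, Fin.forall_fin_two, Finsupp.single_apply]

private def vv (K : Type*) [Field K] : Fin 5 → MvPolynomial (Fin 2) K :=
  ![1, X 0, X 1, (X 1)^2, (X 1)^3]

private lemma mem_g1 {K : Type*} [Field K] :
    ((X 1)^3 - (X 0)^2 : MvPolynomial (Fin 2) K) ∈ conIdeal K :=
  Ideal.subset_span (by simp)

private lemma mem_g2 {K : Type*} [Field K] :
    ((X 0) * (X 1) : MvPolynomial (Fin 2) K) ∈ conIdeal K :=
  Ideal.subset_span (by simp)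

theorem dim_abelianized_contraction_laufer (K : Type*) [Field K] [CharZero K] :
    Module.finrank K (MvPolynomial (Fin 2) K ⧸ conIdeal K) = 5 ∧
    ∃ B : Module.Basis (Fin 5) K (MvPolynomial (Fin 2) K ⧸ conIdeal K),
      B 0 = Ideal.Quotient.mk (conIdeal K) 1 ∧
      B 1 = Ideal.Quotient.mk (conIdeal K) (X 0) ∧
      B 2 = Ideal.Quotient.mk (conIdeal K) (X 1) ∧
      B 3 = Ideal.Quotient.mk (conIdeal K) ((X 1)^2) ∧
      B 4 = Ideal.Quotient.mk (conIdeal K) ((X 1)^3) := by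
  set φ := Ideal.Quotient.mkₐ K (conIdeal K) with hφ
  have hφmk : ∀ p, φ p = Ideal.Quotient.mk (conIdeal K) p := fun p => rfl
  -- linear independence
  have hli : LinearIndependent K (fun i => φ (vv K i)) := by
    rw [Fintype.linearIndependent_iff]
    intro g hg
    have hmem : (∑ i, g i • vv K i) ∈ conIdeal K := by
      rw [← Ideal.Quotient.eq_zero_iff_mem, ← hφmk, map_sum]
      simpa only [map_smul] using hg
    obtain ⟨c0, c1, c2, c3, c4⟩ := coeffs_vanish hmem
    have e : ∀ m : Fin 2 →₀ ℕ, coeff m (∑ i, g i • vv K i) = ∑ i, g i * coeff m (vv K i) := by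
      intro m; rw [coeff_sum]; simp [coeff_smul, smul_eq_mul]
    rw [e] at c0 c1 c2 c3
    rw [e, e] at c4
    simp only [vv, Fin.sum_univ_five, Matrix.cons_val_zero, Matrix.cons_val_one, Matrix.head_cons,
      Matrix.cons_val_two, Matrix.cons_val_three, Matrix.cons_val_four, Matrix.tail_cons,
      coeff_one, coeff_X', X_pow_eq_monomial, coeff_monomial,
      Finsupp.single_eq_single_iff] at c0 c1 c2 c3 c4
    norm_num [Finsupp.single_eq_zero, Finsupp.single_eq_single_iff, eq_comm] at c0 c1 c2 c3 c4
    intro i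
    fin_cases i <;> simp_all
  -- set of spanning vectors
  set S := Submodule.span K (Set.range fun i => φ (vv K i)) with hS
  have mem_of_eq : ∀ (k : Fin 5) (p : MvPolynomial (Fin 2) K), φ p = φ (vv K k) → φ p ∈ S := by
    intro k p h; rw [h]; exact Submodule.subset_span ⟨k, rfl⟩
  have mem_of_zero : ∀ p : MvPolynomial (Fin 2) K, p ∈ conIdeal K → φ p ∈ S := by
    intro p h; rw [hφmk, Ideal.Quotient.eq_zero_iff_mem.mpr h]; exact zero_mem _
  -- products of basis elements with X i stay in the span
  have key : ∀ (j : Fin 5) (i : Fin 2), φ (vv K j) * φ (X i) ∈ S := by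
    intro j i
    rw [← map_mul]
    fin_cases j <;> fin_cases i
    · refine mem_of_eq 1 _ ?_
      show φ ((1 : MvPolynomial (Fin 2) K) * X 0) = φ (X 0)
      exact congrArg φ (one_mul _)
    · refine mem_of_eq 2 _ ?_
      show φ ((1 : MvPolynomial (Fin 2) K) * X 1) = φ (X 1)
      exact congrArg φ (one_mul _)
    · -- X0 * X0 ≡ X1^3
      refine mem_of_eq 4 _ ?_
      show φ (X 0 * X 0) = φ ((X 1)^3)
      rw [hφmk, hφmk, Ideal.Quotient.eq]
      have : (X 0 : MvPolynomial (Fin 2) K) * X 0 - (X 1)^3 = -((X 1)^3 - (X 0)^2) := by ring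
      rw [this]; exact neg_mem mem_g1
    · -- X0 * X1 ≡ 0
      exact mem_of_zero _ (by show (X 0 : MvPolynomial (Fin 2) K) * X 1 ∈ _; exact mem_g2)
    · -- X1 * X0 ≡ 0
      refine mem_of_zero _ ?_
      show (X 1 : MvPolynomial (Fin 2) K) * X 0 ∈ _
      rw [mul_comm]; exact mem_g2
    · refine mem_of_eq 3 _ ?_
      show φ ((X 1 : MvPolynomial (Fin 2) K) * X 1) = φ ((X 1)^2)
      exact congrArg φ (by ring)
    · -- X1^2 * X0 ≡ 0
      refine mem_of_zero _ ?_
      show (X 1 : MvPolynomial (Fin 2) K)^2 * X 0 ∈ _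
      have : (X 1 : MvPolynomial (Fin 2) K)^2 * X 0 = X 1 * (X 0 * X 1) := by ring
      rw [this]; exact Ideal.mul_mem_left _ _ mem_g2
    · refine mem_of_eq 4 _ ?_
      show φ ((X 1 : MvPolynomial (Fin 2) K)^2 * X 1) = φ ((X 1)^3)
      exact congrArg φ (by ring)
    · -- X1^3 * X0 ≡ 0
      refine mem_of_zero _ ?_
      show (X 1 : MvPolynomial (Fin 2) K)^3 * X 0 ∈ _
      have : (X 1 : MvPolynomial (Fin 2) K)^3 * X 0 = (X 1)^2 * (X 0 * X 1) := by ring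
      rw [this]; exact Ideal.mul_mem_left _ _ mem_g2
    · -- X1^4 ≡ 0
      refine mem_of_zero _ ?_
      show (X 1 : MvPolynomial (Fin 2) K)^3 * X 1 ∈ _
      have : (X 1 : MvPolynomial (Fin 2) K)^3 * X 1
          = X 1 * ((X 1)^3 - (X 0)^2) + X 0 * (X 0 * X 1) := by ring
      rw [this]
      exact add_mem (Ideal.mul_mem_left _ _ mem_g1) (Ideal.mul_mem_left _ _ mem_g2)
  -- spanning
  have hsp : ⊤ ≤ S := by
    rintro x -
    obtain ⟨f, rfl⟩ := Ideal.Quotient.mk_surjective x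
    rw [← hφmk]
    induction f using MvPolynomial.induction_on with
    | C a =>
        rw [C_eq_smul_one, map_smul]
        refine Submodule.smul_mem _ _ ?_
        exact Submodule.subset_span ⟨0, rfl⟩
    | add p q hp hq => rw [map_add]; exact add_mem hp hq
    | mul_X p i hp =>
        rw [map_mul]
        refine Submodule.span_induction (p := fun x _ => x * φ (X i) ∈ S)
          ?_ ?_ ?_ ?_ hp
        · rintro y ⟨j, rfl⟩; exact key j i
        · simp
        · intro a b _ _ ha hb; rw [add_mul]; exact add_mem ha hb
        · intro c a _ ha; rw [smul_mul_assoc]; exact Submodule.smul_mem _ _ ha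
  let B : Module.Basis (Fin 5) K (MvPolynomial (Fin 2) K ⧸ conIdeal K) := Module.Basis.mk hli hsp
  have hB : ∀ i, B i = φ (vv K i) := fun i => Module.Basis.mk_apply hli hsp i
  refine ⟨?_, B, ?_, ?_, ?_, ?_, ?_⟩
  · have : Module.finrank K (MvPolynomial (Fin 2) K ⧸ conIdeal K) = Fintype.card (Fin 5) :=
      Module.finrank_eq_card_basis B
    simpa using this
  all_goals rw [hB, hφmk]; simp [vv, Matrix.cons_val_two, Matrix.cons_val_three, Matrix.cons_val_four, Matrix.head_cons, Matrix.tail_cons]
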